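/- Let G be a finite cyclic group and M a G-module such that H^1(G, M) is trivial (multiplicative notation). Then the Tate cohomology group H^{-1}(G, M) is trivial, i.e., the kernel of the norm map N_G : M → M, x ↦ ∏_{g∈G} g(x), equals the augmentation submodule I_G M generated by the elements g(x)/x for g ∈ G and x ∈ M. -/

import Mathlib

/-- If `G` is a finite cyclic group and `M` a `G`-module (written multiplicatively) such that
`H^1(G, M)` is trivial (every 1-cocycle is a coboundary), then `H^{-1}(G, M)` is trivial:
the kernel of the norm map `N_G : M → M` equals the augmentation submodule `I_G M`. -/
theorem stmt0 {G M : Type*} [Group G] [IsCyclic G] [Fintype G] [CommGroup M]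
    [MulDistribMulAction G M]
    (hH1 : ∀ f : G → M, (∀ g h : G, f (g * h) = f g * g • f h) →
      ∃ m : M, ∀ g : G, f g = g • m / m)
    (x : M) (hx : ∏ g : G, g • x = 1) :
    x ∈ Subgroup.closure {y : M | ∃ (g : G) (m : M), y = g • m / m} := by
  obtain ⟨σ, hσ⟩ := IsCyclic.exists_generator (α := G)
  set n := Fintype.card G with hn
  have hord : orderOf σ = n := by rw [orderOf_eq_card_of_forall_mem_zpowers hσ, Nat.card_eq_fintype_card]
  have hσn : σ ^ n = 1 := by rw [← hord]; exact pow_orderOf_eq_one σ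
  set P : ℕ → M := fun k => ∏ i ∈ Finset.range k, σ ^ i • x with hPdef
  have hPadd : ∀ a b, P (a + b) = P a * σ ^ a • P b := by
    intro a b
    simp only [hPdef, Finset.prod_range_add, Finset.smul_prod', smul_smul, ← pow_add]
  have hPn : P n = 1 := by
    have hbij : Function.Bijective (fun i : Fin n => σ ^ (i : ℕ)) := by
      refine (Fintype.bijective_iff_injective_and_card _).2 ⟨?_, by simp [hn]⟩
      intro i j hij
      have h2 := (pow_eq_pow_iff_modEq).1 hij
      rw [hord] at h2
      have h3 : (i : ℕ) % n = (j : ℕ) % n := h2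
      rw [Nat.mod_eq_of_lt i.isLt, Nat.mod_eq_of_lt j.isLt] at h3
      exact Fin.val_injective h3
    have heq : P n = ∏ g : G, g • x := by
      show ∏ i ∈ Finset.range n, σ ^ i • x = ∏ g : G, g • x
      rw [← Fin.prod_univ_eq_prod_range (fun i => σ ^ i • x) n]
      exact Fintype.prod_bijective _ hbij _ _ (fun i => rfl)
    rw [heq, hx]
  have hPcyc : ∀ m, P (n + m) = P m := by
    intro m; rw [hPadd, hPn, one_mul, hσn, one_smul]
  have hPmod : ∀ a, P a = P (a % n) := by
    intro a
    conv_lhs => rw [← Nat.div_add_mod a n]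
    generalize a / n = q
    induction q with
    | zero => simp
    | succ k ih =>
        have h4 : n * (k + 1) + a % n = n + (n * k + a % n) := by ring
        rw [h4, hPcyc, ih]
  have hPwd : ∀ a b, σ ^ a = σ ^ b → P a = P b := by
    intro a b h
    have h2 := (pow_eq_pow_iff_modEq).1 h
    rw [hord] at h2
    rw [hPmod a, hPmod b, (h2 : a % n = b % n)]
  have hex : ∀ g : G, ∃ k : ℕ, σ ^ k = g := by
    intro g
    have := hσ g
    rwa [← mem_powers_iff_mem_zpowers, Submonoid.mem_powers_iff] at this
  set f : G → M := fun g => P (hex g).choose with hfdef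
  have hcoc : ∀ g h : G, f (g * h) = f g * g • f h := by
    intro g h
    have ha := (hex g).choose_spec
    have hb := (hex h).choose_spec
    have hc := (hex (g * h)).choose_spec
    have : σ ^ (hex (g * h)).choose = σ ^ ((hex g).choose + (hex h).choose) := by
      rw [hc, pow_add, ha, hb]
    rw [hfdef]
    simp only []
    rw [hPwd _ _ this, hPadd, ha]
  obtain ⟨m, hm⟩ := hH1 f hcoc
  have hx1 : x = f σ := by
    have hc := (hex σ).choose_spec
    have : P (hex σ).choose = P 1 := hPwd _ _ (by rw [hc, pow_one])
    rw [hfdef]; simp only []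
    rw [this, hPdef]; simp
  rw [hx1, hm σ]
  exact Subgroup.subset_closure ⟨σ, m, rfl⟩
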